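/- For an integer n > 1 and every integer k with 0 ≤ k ≤ n−1, the coefficient of a^{2k} in the rescaled HOMFLY polynomial of the (n,n+1) torus knot equals P_s^k(T_{n,n+1}) = (−1)^k · q^{k(k+1)} · (1/[n−k]_{q²}) · binom_{q²}(n−1, k) · binom_{q²}(2n−k, n+1), as an identity in ℚ(q). -/

import Mathlib

/-!
Work in the field ℚ(q) of rational functions in one variable `q` over ℚ.
`qNum x j` is the q-integer `[j]_x = (1 - x^j)/(1 - x)`, `qFact x j` the q-factorial,
`qBinom x n k` the Gaussian binomial coefficient (all with base `x`, so that base `q^2`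
gives the `q²`-analogues).  `Ps n m` is the rescaled HOMFLY polynomial of the `(n,m)`
torus knot, a polynomial in the variable `a` (= `Polynomial.X`) over ℚ(q), given by
Jones' formula.
-/

noncomputable def q : RatFunc ℚ := RatFunc.X

noncomputable def qNum (x : RatFunc ℚ) (j : ℕ) : RatFunc ℚ := (1 - x ^ j) / (1 - x)

noncomputable def qFact (x : RatFunc ℚ) (j : ℕ) : RatFunc ℚ :=
  ∏ i ∈ Finset.range j, qNum x (i + 1)

noncomputable def qBinom (x : RatFunc ℚ) (n k : ℕ) : RatFunc ℚ :=
  qFact x n / (qFact x k * qFact x (n - k))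

/-- Jones' formula for the rescaled HOMFLY polynomial of the `(n,m)` torus knot,
as a polynomial in `a` (= `Polynomial.X`) over `ℚ(q)`. -/
noncomputable def Ps (n m : ℕ) : Polynomial (RatFunc ℚ) :=
  Polynomial.C ((1 - q ^ 2) / (1 - q ^ (2 * n))) *
    ∑ b ∈ Finset.range n,
      Polynomial.C (q ^ (2 * m * b)) *
        (∏ i ∈ Finset.range (n - 1 - b),
          Polynomial.C ((q ^ (2 * (i + 1)) - 1)⁻¹) *
            (Polynomial.C (q ^ (2 * (i + 1))) * Polynomial.X ^ 2 - 1)) *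
        ∏ j ∈ Finset.range b,
          Polynomial.C ((1 - q ^ (2 * (j + 1)))⁻¹) *
            (Polynomial.X ^ 2 - Polynomial.C (q ^ (2 * (j + 1))))

namespace TorusAux
open Finset Polynomial

lemma one_sub_q_pow_ne_zero (m : ℕ) (hm : 0 < m) : (1 : RatFunc ℚ) - q ^ m ≠ 0 := by
  have hq : q = algebraMap (Polynomial ℚ) (RatFunc ℚ) Polynomial.X := (RatFunc.algebraMap_X).symm
  have : (1 : RatFunc ℚ) - q ^ m =
      algebraMap (Polynomial ℚ) (RatFunc ℚ) (1 - Polynomial.X ^ m) := by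
    rw [map_sub, map_one, map_pow, ← hq]
  rw [this]
  rw [map_ne_zero_iff _ (RatFunc.algebraMap_injective ℚ)]
  intro h
  have := congrArg (fun p => Polynomial.coeff p m) h
  simp [Polynomial.coeff_one, hm.ne'] at this

noncomputable def Phi (m : ℕ) : RatFunc ℚ := ∏ i ∈ Finset.range m, (1 - q ^ (2 * (i + 1)))

@[simp] lemma Phi_zero : Phi 0 = 1 := by simp [Phi]

lemma Phi_succ (m : ℕ) : Phi (m + 1) = Phi m * (1 - q ^ (2 * (m + 1))) := by
  simp [Phi, Finset.prod_range_succ]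

lemma Phi_ne_zero (m : ℕ) : Phi m ≠ 0 := by
  refine Finset.prod_ne_zero_iff.mpr fun i _ => ?_
  exact one_sub_q_pow_ne_zero _ (by omega)

lemma one_sub_qsq_ne_zero : (1 : RatFunc ℚ) - q ^ 2 ≠ 0 := one_sub_q_pow_ne_zero 2 (by norm_num)

lemma qFact_eq (m : ℕ) : qFact (q ^ 2) m = Phi m / (1 - q ^ 2) ^ m := by
  unfold qFact qNum Phi
  rw [Finset.prod_div_distrib, Finset.prod_const, Finset.card_range]
  congr 1
  refine Finset.prod_congr rfl fun i _ => ?_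
  rw [← pow_mul]

lemma qFact_ne_zero (m : ℕ) : qFact (q ^ 2) m ≠ 0 := by
  rw [qFact_eq]
  exact div_ne_zero (Phi_ne_zero m) (pow_ne_zero _ one_sub_qsq_ne_zero)

lemma qBinom_eq (j r : ℕ) : qBinom (q ^ 2) (j + r) j = Phi (j + r) / (Phi j * Phi r) := by
  unfold qBinom
  rw [Nat.add_sub_cancel_left, qFact_eq, qFact_eq, qFact_eq, pow_add]
  have h1 := Phi_ne_zero j
  have h2 := Phi_ne_zero r
  have h3 : ((1 : RatFunc ℚ) - q ^ 2) ^ j ≠ 0 := pow_ne_zero _ one_sub_qsq_ne_zero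
  have h4 : ((1 : RatFunc ℚ) - q ^ 2) ^ r ≠ 0 := pow_ne_zero _ one_sub_qsq_ne_zero
  field_simp


noncomputable def gc1 : ℕ → ℕ → RatFunc ℚ
  | 0, 0 => 1
  | 0, _ + 1 => 0
  | N + 1, 0 => gc1 N 0
  | N + 1, j + 1 => gc1 N (j + 1) - q ^ (2 * (N + 1)) * gc1 N j

noncomputable def gc2 : ℕ → ℕ → RatFunc ℚ
  | 0, 0 => 1
  | 0, _ + 1 => 0
  | b + 1, 0 => -(q ^ (2 * (b + 1))) * gc2 b 0
  | b + 1, l + 1 => gc2 b l - q ^ (2 * (b + 1)) * gc2 b (l + 1)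

lemma gc1_eq_zero : ∀ N j, N < j → gc1 N j = 0 := by
  intro N
  induction N with
  | zero => intro j h; match j, h with | j + 1, _ => rfl
  | succ N ih =>
    intro j h
    match j, h with
    | j + 1, h =>
      show gc1 N (j + 1) - q ^ (2 * (N + 1)) * gc1 N j = 0
      rw [ih _ (by omega), ih _ (by omega)]
      ring

lemma gc2_eq_zero : ∀ b l, b < l → gc2 b l = 0 := by
  intro b
  induction b with
  | zero => intro l h; match l, h with | l + 1, _ => rfl
  | succ b ih =>
    intro l h
    match l, h with
    | l + 1, h =>
      show gc2 b l - q ^ (2 * (b + 1)) * gc2 b (l + 1) = 0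
      rw [ih _ (by omega), ih _ (by omega)]
      ring

lemma gc1_zero_right : ∀ N, gc1 N 0 = 1 := by
  intro N; induction N with
  | zero => rfl
  | succ N ih => show gc1 N 0 = 1; exact ih

lemma gc1_closed : ∀ N j r, N = j + r →
    gc1 N j = (-1) ^ j * q ^ (j * (j + 1)) * Phi N / (Phi j * Phi r) := by
  intro N
  induction N with
  | zero =>
    intro j r h
    obtain ⟨rfl, rfl⟩ : j = 0 ∧ r = 0 := by omega
    simp [gc1]
  | succ N ih =>
    intro j r h
    match j with
    | 0 =>
      obtain rfl : r = N + 1 := by omega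
      rw [gc1_zero_right]
      rw [eq_div_iff (by exact mul_ne_zero (Phi_ne_zero _) (Phi_ne_zero _))]
      simp
    | j' + 1 =>
      show gc1 N (j' + 1) - q ^ (2 * (N + 1)) * gc1 N j' = _
      match r with
      | 0 =>
        obtain rfl : j' = N := by omega
        rw [gc1_eq_zero _ _ (by omega), ih j' 0 (by omega)]
        have h1 := Phi_ne_zero j'
        have h4 := one_sub_q_pow_ne_zero (2 * (j' + 1)) (by omega)
        simp only [Phi_succ, Phi_zero]
        field_simp
        ring
      | r' + 1 =>
        obtain rfl : N = j' + 1 + r' := by omega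
        rw [ih (j' + 1) r' rfl, ih j' (r' + 1) (by omega)]
        have h1 := Phi_ne_zero j'
        have h2 := Phi_ne_zero r'
        have h3 := Phi_ne_zero (j' + 1 + r')
        have h4 := one_sub_q_pow_ne_zero (2 * (j' + 1)) (by omega)
        have h5 := one_sub_q_pow_ne_zero (2 * (r' + 1)) (by omega)
        have h6 := one_sub_q_pow_ne_zero (2 * (j' + 1 + r' + 1)) (by omega)
        simp only [Phi_succ]
        field_simp
        ring

lemma gc2_zero_right : ∀ b, gc2 b 0 = (-1) ^ b * q ^ (b * (b + 1)) := by
  intro b; induction b with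
  | zero => simp [gc2]
  | succ b ih =>
    show -(q ^ (2 * (b + 1))) * gc2 b 0 = _
    rw [ih]; ring

lemma gc2_closed : ∀ b l s, b = l + s →
    gc2 b l = (-1) ^ s * q ^ (s * (s + 1)) * Phi b / (Phi l * Phi s) := by
  intro b
  induction b with
  | zero =>
    intro l s h
    obtain ⟨rfl, rfl⟩ : l = 0 ∧ s = 0 := by omega
    simp [gc2]
  | succ b ih =>
    intro l s h
    match l with
    | 0 =>
      obtain rfl : s = b + 1 := by omega
      rw [gc2_zero_right]
      have h1 := Phi_ne_zero (b + 1)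
      field_simp
      simp
    | l' + 1 =>
      show gc2 b l' - q ^ (2 * (b + 1)) * gc2 b (l' + 1) = _
      match s with
      | 0 =>
        obtain rfl : l' = b := by omega
        rw [gc2_eq_zero l' (l' + 1) (by omega), ih l' 0 (by omega)]
        have h1 := Phi_ne_zero l'
        have h2 := Phi_ne_zero (l' + 1)
        field_simp
        simp
      | s' + 1 =>
        obtain rfl : b = l' + 1 + s' := by omega
        rw [ih l' (s' + 1) (by omega), ih (l' + 1) s' (by omega)]
        have h1 := Phi_ne_zero l'
        have h2 := Phi_ne_zero s'
        have h3 := Phi_ne_zero (l' + 1 + s')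
        have h4 := one_sub_q_pow_ne_zero (2 * (l' + 1)) (by omega)
        have h5 := one_sub_q_pow_ne_zero (2 * (s' + 1)) (by omega)
        have h6 := one_sub_q_pow_ne_zero (2 * (l' + 1 + s' + 1)) (by omega)
        simp only [Phi_succ]
        field_simp
        ring

@[simp] lemma gc1_succ_succ (N j : ℕ) :
    gc1 (N + 1) (j + 1) = gc1 N (j + 1) - q ^ (2 * (N + 1)) * gc1 N j := rfl
@[simp] lemma gc1_succ_zero (N : ℕ) : gc1 (N + 1) 0 = gc1 N 0 := rfl
@[simp] lemma gc2_succ_succ (b l : ℕ) :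
    gc2 (b + 1) (l + 1) = gc2 b l - q ^ (2 * (b + 1)) * gc2 b (l + 1) := rfl
@[simp] lemma gc2_succ_zero (b : ℕ) : gc2 (b + 1) 0 = -(q ^ (2 * (b + 1))) * gc2 b 0 := rfl

lemma L1 {R : Type*} [CommRing R] (f : RatFunc ℚ →+* R) (t : R) :
    ∀ N : ℕ, (∏ i ∈ Finset.range N, (1 - f (q ^ (2 * (i + 1))) * t)) =
      ∑ j ∈ Finset.range (N + 1), f (gc1 N j) * t ^ j := by
  intro N
  induction N with
  | zero => simp [gc1]
  | succ N ih =>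
    rw [Finset.prod_range_succ, ih,
      Finset.sum_range_succ' (fun j => f (gc1 (N + 1) j) * t ^ j) (N + 1)]
    simp only [gc1_succ_succ, gc1_succ_zero, map_sub, map_mul, sub_mul, pow_zero, mul_one]
    rw [Finset.sum_sub_distrib]
    have h1 : ∑ j ∈ Finset.range (N + 1), f (gc1 N j) * t ^ j
        = (∑ j ∈ Finset.range (N + 1), f (gc1 N (j + 1)) * t ^ (j + 1)) + f (gc1 N 0) := by
      rw [Finset.sum_range_succ (fun j => f (gc1 N (j + 1)) * t ^ (j + 1)) N,
        gc1_eq_zero N (N + 1) (by omega)]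
      rw [Finset.sum_range_succ' (fun j => f (gc1 N j) * t ^ j) N]
      simp
    rw [mul_sub, mul_one]
    have h2 : (∑ j ∈ Finset.range (N + 1), f (gc1 N j) * t ^ j) * (f (q ^ (2 * (N + 1))) * t)
        = ∑ j ∈ Finset.range (N + 1), f (q ^ (2 * (N + 1))) * f (gc1 N j) * t ^ (j + 1) := by
      rw [Finset.sum_mul]
      exact Finset.sum_congr rfl fun j _ => by ring
    rw [h2, h1]
    ring

lemma L2 {R : Type*} [CommRing R] (f : RatFunc ℚ →+* R) (t : R) :
    ∀ b : ℕ, (∏ i ∈ Finset.range b, (t - f (q ^ (2 * (i + 1))))) =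
      ∑ l ∈ Finset.range (b + 1), f (gc2 b l) * t ^ l := by
  intro b
  induction b with
  | zero => simp [gc2]
  | succ b ih =>
    rw [Finset.prod_range_succ, ih,
      Finset.sum_range_succ' (fun l => f (gc2 (b + 1) l) * t ^ l) (b + 1)]
    simp only [gc2_succ_succ, gc2_succ_zero, map_sub, map_mul, map_neg, sub_mul, pow_zero,
      mul_one]
    rw [Finset.sum_sub_distrib]
    have h2 : (∑ l ∈ Finset.range (b + 1), f (gc2 b l) * t ^ l) * f (q ^ (2 * (b + 1)))
        = (∑ l ∈ Finset.range (b + 1), f (q ^ (2 * (b + 1))) * f (gc2 b (l + 1)) * t ^ (l + 1))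
          + f (q ^ (2 * (b + 1))) * f (gc2 b 0) := by
      rw [Finset.sum_mul]
      rw [Finset.sum_range_succ
        (fun l => f (q ^ (2 * (b + 1))) * f (gc2 b (l + 1)) * t ^ (l + 1)) b,
        gc2_eq_zero b (b + 1) (by omega)]
      rw [Finset.sum_range_succ' (fun l => f (gc2 b l) * t ^ l * f (q ^ (2 * (b + 1)))) b]
      simp only [map_zero, mul_zero, zero_mul, add_zero, pow_zero, one_mul, mul_one]
      congr 1
      · exact Finset.sum_congr rfl fun l _ => by ring
      · ring
    have h3 : (∑ l ∈ Finset.range (b + 1), f (gc2 b l) * t ^ l) * t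
        = ∑ l ∈ Finset.range (b + 1), f (gc2 b l) * t ^ (l + 1) := by
      rw [Finset.sum_mul]
      exact Finset.sum_congr rfl fun l _ => by ring
    rw [mul_sub, h3, h2]
    ring

lemma A_eq (N : ℕ) :
    (∏ i ∈ Finset.range N,
        (Polynomial.C ((q ^ (2 * (i + 1)) - 1)⁻¹) *
          (Polynomial.C (q ^ (2 * (i + 1))) * Polynomial.X ^ 2 - 1))) =
      Polynomial.C (Phi N)⁻¹ *
        ∑ j ∈ Finset.range (N + 1), Polynomial.C (gc1 N j) * Polynomial.X ^ (2 * j) := by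
  have hfac : ∀ u : RatFunc ℚ,
      (Polynomial.C (u - 1)⁻¹ : Polynomial (RatFunc ℚ)) * (Polynomial.C u * Polynomial.X ^ 2 - 1)
        = Polynomial.C (1 - u)⁻¹ * (1 - Polynomial.C u * Polynomial.X ^ 2) := by
    intro u
    have h : (u - 1)⁻¹ = -(1 - u)⁻¹ := by
      rw [show u - 1 = -(1 - u) by ring, inv_neg]
    rw [h, map_neg]
    ring
  rw [Finset.prod_congr rfl fun i _ => hfac (q ^ (2 * (i + 1))), Finset.prod_mul_distrib]
  have h2 : (∏ i ∈ Finset.range N, (Polynomial.C (1 - q ^ (2 * (i + 1)))⁻¹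
      : Polynomial (RatFunc ℚ))) = Polynomial.C (Phi N)⁻¹ := by
    rw [← map_prod, Finset.prod_inv_distrib]
    rfl
  have h3 : (∏ i ∈ Finset.range N,
      (1 - Polynomial.C (q ^ (2 * (i + 1))) * Polynomial.X ^ 2)) =
      ∑ j ∈ Finset.range (N + 1), Polynomial.C (gc1 N j) * Polynomial.X ^ (2 * j) := by
    rw [L1 Polynomial.C (Polynomial.X ^ 2) N]
    exact Finset.sum_congr rfl fun j _ => by rw [← pow_mul]
  rw [h2, h3]

lemma B_eq (b : ℕ) :
    (∏ j ∈ Finset.range b,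
        (Polynomial.C ((1 - q ^ (2 * (j + 1)))⁻¹) *
          (Polynomial.X ^ 2 - Polynomial.C (q ^ (2 * (j + 1)))))) =
      Polynomial.C (Phi b)⁻¹ *
        ∑ l ∈ Finset.range (b + 1), Polynomial.C (gc2 b l) * Polynomial.X ^ (2 * l) := by
  rw [Finset.prod_mul_distrib]
  have h2 : (∏ i ∈ Finset.range b, (Polynomial.C (1 - q ^ (2 * (i + 1)))⁻¹
      : Polynomial (RatFunc ℚ))) = Polynomial.C (Phi b)⁻¹ := by
    rw [← map_prod, Finset.prod_inv_distrib]
    rfl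
  have h3 : (∏ i ∈ Finset.range b,
      (Polynomial.X ^ 2 - Polynomial.C (q ^ (2 * (i + 1))))) =
      ∑ l ∈ Finset.range (b + 1), Polynomial.C (gc2 b l) * Polynomial.X ^ (2 * l) := by
    rw [L2 Polynomial.C (Polynomial.X ^ 2) b]
    exact Finset.sum_congr rfl fun l _ => by rw [← pow_mul]
  rw [h2, h3]

lemma coeff_part (N b k : ℕ) :
    ((∑ j ∈ Finset.range (N + 1), Polynomial.C (gc1 N j) * Polynomial.X ^ (2 * j)) *
        (∑ l ∈ Finset.range (b + 1), Polynomial.C (gc2 b l) * Polynomial.X ^ (2 * l))).coeff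
        (2 * k) =
      ∑ j ∈ Finset.range (N + 1), gc1 N j * (if j ≤ k then gc2 b (k - j) else 0) := by
  rw [Finset.sum_mul_sum]
  rw [Polynomial.finset_sum_coeff]
  refine Finset.sum_congr rfl fun j hj => ?_
  rw [Polynomial.finset_sum_coeff]
  have hterm : ∀ l, (Polynomial.C (gc1 N j) * Polynomial.X ^ (2 * j) *
      (Polynomial.C (gc2 b l) * Polynomial.X ^ (2 * l))).coeff (2 * k)
      = gc1 N j * gc2 b l * (if 2 * k = 2 * j + 2 * l then 1 else 0) := by
    intro l
    have : Polynomial.C (gc1 N j) * Polynomial.X ^ (2 * j) *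
        (Polynomial.C (gc2 b l) * Polynomial.X ^ (2 * l))
        = Polynomial.C (gc1 N j * gc2 b l) * Polynomial.X ^ (2 * j + 2 * l) := by
      rw [map_mul, pow_add]
      ring
    rw [this, Polynomial.coeff_C_mul, Polynomial.coeff_X_pow]
  rw [Finset.sum_congr rfl fun l _ => hterm l]
  by_cases hjk : j ≤ k
  · have hcond : ∀ l, (if 2 * k = 2 * j + 2 * l then (1 : RatFunc ℚ) else 0)
        = if l = k - j then 1 else 0 := by
      intro l
      by_cases h : l = k - j
      · subst h
        rw [if_pos (by omega), if_pos rfl]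
      · rw [if_neg (by omega), if_neg h]
    rw [Finset.sum_congr rfl fun l _ => by rw [hcond l]]
    rw [if_pos hjk]
    have : ∀ l ∈ Finset.range (b + 1),
        gc1 N j * gc2 b l * (if l = k - j then (1 : RatFunc ℚ) else 0)
        = if l = k - j then gc1 N j * gc2 b (k - j) else 0 := by
      intro l _
      by_cases h : l = k - j
      · subst h; rw [if_pos rfl, if_pos rfl]; ring
      · rw [if_neg h, if_neg h]; ring
    rw [Finset.sum_congr rfl this, Finset.sum_ite_eq' (Finset.range (b + 1)) (k - j)
      (fun _ => gc1 N j * gc2 b (k - j))]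
    by_cases hmem : k - j ∈ Finset.range (b + 1)
    · rw [if_pos hmem]
    · rw [if_neg hmem, gc2_eq_zero b (k - j) (by simp [Finset.mem_range] at hmem; omega)]
      ring
  · rw [if_neg hjk]
    rw [Finset.sum_congr rfl fun l _ => by
      rw [if_neg (by omega : ¬ 2 * k = 2 * j + 2 * l)], mul_zero]
    simp

lemma Phi_add (a m : ℕ) :
    Phi (a + m) = Phi a * ∏ i ∈ Finset.range m, (1 - q ^ (2 * (a + i + 1))) := by
  rw [Phi, Phi, Finset.prod_range_add]

lemma sum_two_mul_succ (k : ℕ) : ∑ i ∈ Finset.range k, 2 * (i + 1) = k * (k + 1) := by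
  induction k with
  | zero => simp
  | succ k ih => rw [Finset.sum_range_succ, ih]; ring

lemma prod_V (k M : ℕ) :
    Phi (k + M + 2) * ∏ i ∈ Finset.range M, (1 - q ^ (2 * (i + 1)) * q ^ (2 * (k + M + 2)))
      = Phi (k + 2 * M + 2) := by
  have h := Phi_add (k + M + 2) M
  rw [show k + M + 2 + M = k + 2 * M + 2 by omega] at h
  rw [h]
  congr 1
  refine Finset.prod_congr rfl fun i _ => ?_
  rw [← pow_add]
  congr 2
  omega

lemma prod_U (k M : ℕ) :
    q ^ (2 * (k + M + 2) * k) *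
        ∏ i ∈ Finset.range k, (1 - q ^ (2 * (i + 1)) * (q ^ (2 * (k + M + 2)))⁻¹)
      = (-1) ^ k * q ^ (k * (k + 1)) * Phi (k + M + 1) / Phi (M + 1) := by
  have hq0 : q ≠ 0 := by unfold q; exact RatFunc.X_ne_zero
  have hqc : (q ^ (2 * (k + M + 2)) : RatFunc ℚ) ≠ 0 := pow_ne_zero _ hq0
  have h1 : q ^ (2 * (k + M + 2) * k) = ∏ _i ∈ Finset.range k, q ^ (2 * (k + M + 2)) := by
    rw [Finset.prod_const, Finset.card_range, ← pow_mul]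
  rw [h1, ← Finset.prod_mul_distrib]
  have h2 : ∀ i, q ^ (2 * (k + M + 2)) * (1 - q ^ (2 * (i + 1)) * (q ^ (2 * (k + M + 2)))⁻¹)
      = q ^ (2 * (k + M + 2)) - q ^ (2 * (i + 1)) := by
    intro i
    field_simp
  rw [Finset.prod_congr rfl fun i _ => h2 i]
  rw [← Finset.prod_range_reflect (fun i => q ^ (2 * (k + M + 2)) - q ^ (2 * (i + 1))) k]
  have h3 : ∀ i ∈ Finset.range k,
      q ^ (2 * (k + M + 2)) - q ^ (2 * (k - 1 - i + 1))
        = (-1) * (q ^ (2 * (k - i)) * (1 - q ^ (2 * (M + 1 + i + 1)))) := by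
    intro i hi
    simp only [Finset.mem_range] at hi
    rw [show 2 * (k - 1 - i + 1) = 2 * (k - i) by omega,
      show 2 * (k + M + 2) = 2 * (k - i) + 2 * (M + 1 + i + 1) by omega, pow_add]
    ring
  rw [Finset.prod_congr rfl h3, Finset.prod_mul_distrib, Finset.prod_mul_distrib,
    Finset.prod_const, Finset.card_range]
  have h4 : ∏ i ∈ Finset.range k, q ^ (2 * (k - i))
      = q ^ (k * (k + 1)) := by
    rw [Finset.prod_pow_eq_pow_sum]
    congr 1
    rw [← sum_two_mul_succ k, ← Finset.sum_range_reflect (fun i => 2 * (i + 1)) k]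
    refine Finset.sum_congr rfl fun i hi => ?_
    simp only [Finset.mem_range] at hi
    omega
  have h5 : ∏ i ∈ Finset.range k, (1 - q ^ (2 * (M + 1 + i + 1)))
      = Phi (k + M + 1) / Phi (M + 1) := by
    have h := Phi_add (M + 1) k
    rw [show M + 1 + k = k + M + 1 by omega] at h
    rw [eq_div_iff (Phi_ne_zero (M + 1)), h]
    ring
  rw [h4, h5]
  ring

end TorusAux

open TorusAux

set_option maxHeartbeats 1000000

/-- For `n > 1` and `0 ≤ k ≤ n-1`, the coefficient of `a^{2k}` of the rescaled HOMFLY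
polynomial of the `(n,n+1)` torus knot equals
`(-1)^k q^{k(k+1)} (1/[n-k]_{q²}) binom_{q²}(n-1,k) binom_{q²}(2n-k, n+1)`. -/
theorem coeff_Ps_succ (n k : ℕ) (hn : 1 < n) (hk : k ≤ n - 1) :
    (Ps n (n + 1)).coeff (2 * k) =
      (-1) ^ k * q ^ (k * (k + 1)) * (1 / qNum (q ^ 2) (n - k)) *
        qBinom (q ^ 2) (n - 1) k * qBinom (q ^ 2) (2 * n - k) (n + 1) := by
  classical
  obtain ⟨M, rfl⟩ : ∃ M, n = k + M + 1 := ⟨n - 1 - k, by omega⟩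
  clear hn hk
  have hq0 : q ≠ 0 := by unfold q; exact RatFunc.X_ne_zero
  have hPs : Ps (k + M + 1) (k + M + 1 + 1) =
      Polynomial.C ((1 - q ^ 2) / (1 - q ^ (2 * (k + M + 1)))) *
        ∑ b ∈ Finset.range (k + M + 1),
          Polynomial.C (q ^ (2 * (k + M + 2) * b) * (Phi (k + M + 1 - 1 - b))⁻¹ * (Phi b)⁻¹) *
            ((∑ j ∈ Finset.range (k + M + 1 - 1 - b + 1),
                Polynomial.C (gc1 (k + M + 1 - 1 - b) j) * Polynomial.X ^ (2 * j)) *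
              (∑ l ∈ Finset.range (b + 1),
                Polynomial.C (gc2 b l) * Polynomial.X ^ (2 * l))) := by
    unfold Ps
    congr 1
    refine Finset.sum_congr rfl fun b hb => ?_
    rw [A_eq, B_eq, map_mul, map_mul]
    ring
  rw [hPs, Polynomial.coeff_C_mul, Polynomial.finset_sum_coeff]
  have h1 : ∀ b ∈ Finset.range (k + M + 1),
      (Polynomial.C (q ^ (2 * (k + M + 2) * b) * (Phi (k + M + 1 - 1 - b))⁻¹ * (Phi b)⁻¹) *
          ((∑ j ∈ Finset.range (k + M + 1 - 1 - b + 1),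
              Polynomial.C (gc1 (k + M + 1 - 1 - b) j) * Polynomial.X ^ (2 * j)) *
            (∑ l ∈ Finset.range (b + 1),
              Polynomial.C (gc2 b l) * Polynomial.X ^ (2 * l)))).coeff (2 * k)
        = ∑ j ∈ Finset.range (k + M + 1),
            q ^ (2 * (k + M + 2) * b) * (Phi (k + M + 1 - 1 - b))⁻¹ * (Phi b)⁻¹ *
              (gc1 (k + M + 1 - 1 - b) j * (if j ≤ k then gc2 b (k - j) else 0)) := by
    intro b hb
    rw [Polynomial.coeff_C_mul, coeff_part (k + M + 1 - 1 - b) b k]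
    rw [Finset.sum_subset
      (Finset.range_subset_range.mpr (show k + M + 1 - 1 - b + 1 ≤ k + M + 1 by omega))
      (fun j _ hj => by
        rw [gc1_eq_zero _ _ (by simp only [Finset.mem_range] at hj ⊢; omega), zero_mul])]
    rw [Finset.mul_sum]
  rw [Finset.sum_congr rfl h1, Finset.sum_comm]
  have h2 : ∑ j ∈ Finset.range (k + M + 1), ∑ b ∈ Finset.range (k + M + 1),
        q ^ (2 * (k + M + 2) * b) * (Phi (k + M + 1 - 1 - b))⁻¹ * (Phi b)⁻¹ *
          (gc1 (k + M + 1 - 1 - b) j * (if j ≤ k then gc2 b (k - j) else 0))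
      = ∑ j ∈ Finset.range (k + 1), ∑ b ∈ Finset.range (k + M + 1),
          q ^ (2 * (k + M + 2) * b) * (Phi (k + M + 1 - 1 - b))⁻¹ * (Phi b)⁻¹ *
            (gc1 (k + M + 1 - 1 - b) j * (if j ≤ k then gc2 b (k - j) else 0)) := by
    refine (Finset.sum_subset
      (Finset.range_subset_range.mpr (show k + 1 ≤ k + M + 1 by omega)) fun j _ hj => ?_).symm
    refine Finset.sum_eq_zero fun b _ => ?_
    simp only [Finset.mem_range] at hj
    rw [if_neg (by omega), mul_zero, mul_zero]
  rw [h2]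
  have h3 : ∀ j ∈ Finset.range (k + 1),
      ∑ b ∈ Finset.range (k + M + 1),
          q ^ (2 * (k + M + 2) * b) * (Phi (k + M + 1 - 1 - b))⁻¹ * (Phi b)⁻¹ *
            (gc1 (k + M + 1 - 1 - b) j * (if j ≤ k then gc2 b (k - j) else 0))
        = ∑ r ∈ Finset.range (M + 1),
            q ^ (2 * (k + M + 2) * (k - j + r)) * (Phi (k + M + 1 - 1 - (k - j + r)))⁻¹ *
              (Phi (k - j + r))⁻¹ *
              (gc1 (k + M + 1 - 1 - (k - j + r)) j *
                (if j ≤ k then gc2 (k - j + r) (k - j) else 0)) := by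
    intro j hj
    simp only [Finset.mem_range] at hj
    have hsub : Finset.Ico (k - j) (k + M + 1 - j) ⊆ Finset.range (k + M + 1) := by
      intro b hb
      simp only [Finset.mem_Ico] at hb
      simp only [Finset.mem_range]
      omega
    have hvan : ∀ b ∈ Finset.range (k + M + 1), b ∉ Finset.Ico (k - j) (k + M + 1 - j) →
        q ^ (2 * (k + M + 2) * b) * (Phi (k + M + 1 - 1 - b))⁻¹ * (Phi b)⁻¹ *
          (gc1 (k + M + 1 - 1 - b) j * (if j ≤ k then gc2 b (k - j) else 0)) = 0 := by
      intro b hb hb2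
      simp only [Finset.mem_range] at hb
      simp only [Finset.mem_Ico, not_and_or, not_le] at hb2
      rcases hb2 with hb2 | hb2
      · rw [if_pos (by omega), gc2_eq_zero b (k - j) (by omega), mul_zero, mul_zero]
      · rw [gc1_eq_zero (k + M + 1 - 1 - b) j (by omega), zero_mul, mul_zero]
    rw [← Finset.sum_subset hsub hvan, Finset.sum_Ico_eq_sum_range,
      show k + M + 1 - j - (k - j) = M + 1 by omega]
  rw [Finset.sum_congr rfl h3]
  have h4 : ∀ j ∈ Finset.range (k + 1), ∀ r ∈ Finset.range (M + 1),
      q ^ (2 * (k + M + 2) * (k - j + r)) * (Phi (k + M + 1 - 1 - (k - j + r)))⁻¹ *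
          (Phi (k - j + r))⁻¹ *
          (gc1 (k + M + 1 - 1 - (k - j + r)) j *
            (if j ≤ k then gc2 (k - j + r) (k - j) else 0))
        = (gc1 k j * q ^ (2 * (k + M + 2) * (k - j)) * (Phi k)⁻¹) *
          (gc1 M r * (q ^ (2 * (k + M + 2))) ^ r * (Phi M)⁻¹) := by
    intro j hj r hr
    simp only [Finset.mem_range] at hj hr
    obtain ⟨j', rfl⟩ : ∃ j', k = j + j' := ⟨k - j, by omega⟩
    obtain ⟨r', rfl⟩ : ∃ r', M = r + r' := ⟨M - r, by omega⟩
    rw [show j + j' - j = j' by omega]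
    rw [show j + j' + (r + r') + 1 - 1 - (j' + r) = j + r' by omega]
    rw [if_pos (by omega)]
    rw [gc1_closed (j + r') j r' rfl, gc2_closed (j' + r) j' r rfl,
      gc1_closed (j + j') j j' rfl, gc1_closed (r + r') r r' rfl]
    have p1 := Phi_ne_zero j
    have p2 := Phi_ne_zero j'
    have p3 := Phi_ne_zero r
    have p4 := Phi_ne_zero r'
    have p5 := Phi_ne_zero (j + r')
    have p6 := Phi_ne_zero (j' + r)
    have p7 := Phi_ne_zero (j + j')
    have p8 := Phi_ne_zero (r + r')
    field_simp
    ring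
  rw [Finset.sum_congr rfl fun j hj => Finset.sum_congr rfl fun r hr => h4 j hj r hr]
  rw [← Finset.sum_mul_sum]
  have hA : ∑ j ∈ Finset.range (k + 1),
        gc1 k j * q ^ (2 * (k + M + 2) * (k - j)) * (Phi k)⁻¹
      = (-1) ^ k * q ^ (k * (k + 1)) * Phi (k + M + 1) / Phi (M + 1) * (Phi k)⁻¹ := by
    have hstep : ∀ j ∈ Finset.range (k + 1),
        gc1 k j * q ^ (2 * (k + M + 2) * (k - j)) * (Phi k)⁻¹
          = gc1 k j * ((q ^ (2 * (k + M + 2)))⁻¹) ^ j *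
              (q ^ (2 * (k + M + 2) * k) * (Phi k)⁻¹) := by
      intro j hj
      simp only [Finset.mem_range] at hj
      obtain ⟨j'', rfl⟩ : ∃ j'', k = j + j'' := ⟨k - j, by omega⟩
      rw [show j + j'' - j = j'' by omega]
      have hx : ((q ^ (2 * (j + j'' + M + 2)))⁻¹) ^ j * q ^ (2 * (j + j'' + M + 2) * (j + j''))
          = q ^ (2 * (j + j'' + M + 2) * j'') := by
        rw [inv_pow, inv_mul_eq_iff_eq_mul₀ (pow_ne_zero _ (pow_ne_zero _ hq0)),
          ← pow_mul, ← pow_add]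
        congr 1
        ring
      rw [← hx]
      ring
    rw [Finset.sum_congr rfl hstep, ← Finset.sum_mul]
    have hL := L1 (RingHom.id (RatFunc ℚ)) ((q ^ (2 * (k + M + 2)))⁻¹) k
    simp only [RingHom.id_apply] at hL
    rw [← hL]
    rw [show (∏ i ∈ Finset.range k, (1 - q ^ (2 * (i + 1)) * (q ^ (2 * (k + M + 2)))⁻¹)) *
          (q ^ (2 * (k + M + 2) * k) * (Phi k)⁻¹)
        = q ^ (2 * (k + M + 2) * k) *
            (∏ i ∈ Finset.range k, (1 - q ^ (2 * (i + 1)) * (q ^ (2 * (k + M + 2)))⁻¹)) *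
            (Phi k)⁻¹ from by ring, prod_U k M]
  have hB : ∑ r ∈ Finset.range (M + 1),
        gc1 M r * (q ^ (2 * (k + M + 2))) ^ r * (Phi M)⁻¹
      = Phi (k + 2 * M + 2) / Phi (k + M + 2) * (Phi M)⁻¹ := by
    rw [← Finset.sum_mul]
    have hL := L1 (RingHom.id (RatFunc ℚ)) (q ^ (2 * (k + M + 2))) M
    simp only [RingHom.id_apply] at hL
    rw [← hL]
    congr 1
    rw [eq_div_iff (Phi_ne_zero (k + M + 2)), ← prod_V k M]
    ring
  rw [hA, hB]
  rw [show k + M + 1 - k = M + 1 by omega, show k + M + 1 - 1 = k + M by omega,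
    show 2 * (k + M + 1) - k = k + M + 2 + M by omega,
    show k + M + 1 + 1 = k + M + 2 by omega,
    qBinom_eq k M, qBinom_eq (k + M + 2) M]
  have hnum : qNum (q ^ 2) (M + 1) = (1 - q ^ (2 * (M + 1))) / (1 - q ^ 2) := by
    unfold qNum
    rw [← pow_mul]
  rw [hnum]
  have p1 := Phi_ne_zero k
  have p2 := Phi_ne_zero M
  have p3 := Phi_ne_zero (k + M)
  have p4 := Phi_ne_zero (k + M + 2)
  have p5 := Phi_ne_zero (k + 2 * M + 2)
  have p6 := Phi_ne_zero (M + 1)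
  have p7 := Phi_ne_zero (k + M + 1)
  have q1 := one_sub_qsq_ne_zero
  have q2 := one_sub_q_pow_ne_zero (2 * (M + 1)) (by omega)
  have q3 := one_sub_q_pow_ne_zero (2 * (k + M + 1)) (by omega)
  field_simp
  rw [Phi_succ M, Phi_succ (k + M)]
  ring
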